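/- Let $r \ge 1$ be an integer, $\beta > -1$ a real number, and define $p_n(x;\beta) = \sum_{k=0}^n \binom{n}{k} \frac{(-1)^{n-k}}{\Gamma(\frac{\beta+k}{r}+1)} x^k$. Then $\int_0^\infty x^{rn+r-1} p_n(x;\beta)\, x^\beta e^{-x^r}\, dx = \frac{n!}{r^{n+1}}$. -/

import Mathlib

/-- The polynomial `p_n(x; β)` for the Laguerre-Angelesco polynomials on an `r`-star. -/
noncomputable def laPoly (r n : ℕ) (β : ℝ) (x : ℝ) : ℝ :=
  ∑ k ∈ Finset.range (n + 1),
    (n.choose k : ℝ) * (-1) ^ (n - k) / Real.Gamma ((β + k) / r + 1) * x ^ k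


open Finset Polynomial fwdDiff

open Finset Polynomial fwdDiff

lemma fwdDiff_iter_poly : ∀ (n : ℕ) (P : ℝ[X]), P.natDegree ≤ n →
    (Δ_[(1:ℝ)])^[n] (fun x : ℝ => P.eval x) = fun _ => (n.factorial : ℝ) * P.coeff n := by
  intro n
  induction n with
  | zero =>
    intro P hP
    funext x
    simp only [Function.iterate_zero, id_eq, Nat.factorial_zero, Nat.cast_one, one_mul]
    rw [Polynomial.eval_eq_sum_range' (Nat.lt_succ_of_le hP)]
    simp
  | succ n IH =>
    intro P hP
    set Q : ℝ[X] := Polynomial.taylor 1 P - P with hQ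
    have hQdeg : Q.natDegree ≤ n := by
      rw [Polynomial.natDegree_le_iff_coeff_eq_zero]
      intro m hm
      have hd := Polynomial.natDegree_hasseDeriv_le P m
      rw [hQ, Polynomial.coeff_sub, Polynomial.taylor_coeff,
        Polynomial.eval_eq_sum_range' (show (Polynomial.hasseDeriv m P).natDegree < 1 by omega)]
      simp [Polynomial.hasseDeriv_coeff]
    have hQcoeff : Q.coeff n = (n + 1 : ℝ) * P.coeff (n + 1) := by
      have hd := Polynomial.natDegree_hasseDeriv_le P n
      rw [hQ, Polynomial.coeff_sub, Polynomial.taylor_coeff,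
        Polynomial.eval_eq_sum_range' (show (Polynomial.hasseDeriv n P).natDegree < 2 by omega)]
      rw [Finset.sum_range_succ, Finset.sum_range_one]
      simp only [Polynomial.hasseDeriv_coeff, zero_add, Nat.choose_self, Nat.cast_one, one_mul,
        one_pow, mul_one, pow_one]
      rw [Nat.add_comm 1 n, Nat.choose_succ_self_right]
      push_cast
      ring
    have hstep : Δ_[(1:ℝ)] (fun x : ℝ => P.eval x) = fun x : ℝ => Q.eval x := by
      funext x
      simp [fwdDiff, hQ, Polynomial.taylor_eval]
    rw [Function.iterate_succ_apply, hstep, IH Q hQdeg, hQcoeff]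
    funext x
    push_cast [Nat.factorial_succ]
    ring

lemma key_sum (n : ℕ) (a b : ℝ) (ha : a ≠ 0) :
    ∑ k ∈ Finset.range (n + 1),
      (-1 : ℝ) ^ (n - k) * (n.choose k : ℝ) * ∏ i ∈ Finset.range n, (a * k + b + i)
      = a ^ n * n.factorial := by
  set P : ℝ[X] := ∏ i ∈ Finset.range n, (C a * X + C (b + i)) with hP
  have hne : ∀ i ∈ Finset.range n, (C a * X + C (b + (i:ℝ))) ≠ 0 := by
    intro i _ h
    have := Polynomial.natDegree_linear ha (b := b + i)
    rw [h] at this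
    simp at this
  have hdeg : P.natDegree = n := by
    rw [hP, Polynomial.natDegree_prod _ _ hne,
      Finset.sum_congr rfl (fun i _ => Polynomial.natDegree_linear ha)]
    simp
  have hlead : P.coeff n = a ^ n := by
    have h1 : P.leadingCoeff = a ^ n := by
      rw [hP, Polynomial.leadingCoeff_prod,
        Finset.prod_congr rfl (fun i _ => Polynomial.leadingCoeff_linear ha)]
      simp
    rwa [Polynomial.leadingCoeff, hdeg] at h1
  have heval : ∀ x : ℝ, P.eval x = ∏ i ∈ Finset.range n, (a * x + b + i) := by
    intro x
    rw [hP, Polynomial.eval_prod]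
    refine Finset.prod_congr rfl fun i _ => by simp; ring
  have h1 := fwdDiff_iter_eq_sum_shift (1:ℝ) (fun x : ℝ => P.eval x) n 0
  rw [congrFun (fwdDiff_iter_poly n P hdeg.le) 0, hlead] at h1
  rw [mul_comm (a ^ n) (n.factorial : ℝ), h1]
  refine Finset.sum_congr rfl fun k _ => ?_
  rw [heval, zsmul_eq_mul]
  push_cast
  ring

lemma Gamma_add_nat (x : ℝ) (hx : 0 < x) (n : ℕ) :
    Real.Gamma (x + n) = Real.Gamma x * ∏ i ∈ Finset.range n, (x + i) := by
  induction n with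
  | zero => simp
  | succ n IH =>
    have h1 : x + (n + 1 : ℕ) = (x + n) + 1 := by push_cast; ring
    rw [h1, Real.Gamma_add_one (by positivity), IH, Finset.prod_range_succ]
    ring


theorem stmt_4 (r n : ℕ) (hr : 1 ≤ r) (β : ℝ) (hβ : β > -1) :
    ∫ x in Set.Ioi (0 : ℝ),
      x ^ (r * n + r - 1) * laPoly r n β x * x ^ β * Real.exp (-(x ^ r))
      = (n.factorial : ℝ) / r ^ (n + 1) := by
  have hr0 : (0:ℝ) < r := by exact_mod_cast hr
  have hr1 : (1:ℝ) ≤ r := by exact_mod_cast hr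
  set c : ℕ → ℝ := fun k => (n.choose k : ℝ) * (-1) ^ (n - k) / Real.Gamma ((β + k) / r + 1)
    with hc
  set m : ℕ → ℕ := fun k => r * n + r - 1 + k with hm
  have hq : ∀ k, (-1 : ℝ) < β + (m k : ℕ) := fun k => by
    have : (0:ℝ) ≤ (m k : ℕ) := Nat.cast_nonneg _
    linarith
  have hint : ∀ k ∈ Finset.range (n+1), MeasureTheory.IntegrableOn
      (fun x : ℝ => c k * (x ^ (β + (m k : ℕ)) * Real.exp (-x ^ (r:ℝ)))) (Set.Ioi 0) := by
    intro k _
    exact (integrableOn_rpow_mul_exp_neg_rpow (hq k) hr0).const_mul _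
  have hcong : ∀ x ∈ Set.Ioi (0:ℝ),
      x ^ (r * n + r - 1) * laPoly r n β x * x ^ β * Real.exp (-(x ^ r))
      = ∑ k ∈ Finset.range (n+1), c k * (x ^ (β + (m k : ℕ)) * Real.exp (-x ^ (r:ℝ))) := by
    intro x hx
    rw [Set.mem_Ioi] at hx
    rw [laPoly, Finset.mul_sum, Finset.sum_mul, Finset.sum_mul]
    refine Finset.sum_congr rfl fun k _ => ?_
    have h1 : x ^ (β + ((m k : ℕ) : ℝ)) = x ^ (((r*n+r-1 : ℕ)) : ℝ) * x ^ (k : ℝ) * x ^ β := by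
      rw [← Real.rpow_add hx, ← Real.rpow_add hx]
      congr 1
      rw [hm]
      push_cast
      ring
    rw [h1]
    simp only [Real.rpow_natCast]
    ring
  rw [MeasureTheory.setIntegral_congr_fun measurableSet_Ioi hcong,
    MeasureTheory.integral_finset_sum _ hint]
  have hval : ∀ k ∈ Finset.range (n+1),
      ∫ x in Set.Ioi (0:ℝ), c k * (x ^ (β + (m k : ℕ)) * Real.exp (-x ^ (r:ℝ)))
      = (1/r) * ((-1:ℝ)^(n-k) * (n.choose k) *
          ∏ i ∈ Finset.range n, ((1/r) * k + (β/r + 1) + i)) := by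
    intro k _
    rw [MeasureTheory.integral_const_mul, integral_rpow_mul_exp_neg_rpow hr0 (hq k)]
    have hz : (0:ℝ) < (β + k) / r + 1 := by
      have hk : (0:ℝ) ≤ k := Nat.cast_nonneg _
      have h1 : -(r:ℝ) < β + k := by linarith
      have h2 : (-(r:ℝ))/r < (β + k)/r := by
        exact div_lt_div_of_pos_right h1 hr0
      rw [neg_div, div_self hr0.ne'] at h2
      linarith
    have harg : (β + (m k : ℕ) + 1) / r = ((β + k) / r + 1) + n := by
      rw [hm]
      push_cast [Nat.cast_sub (by nlinarith : 1 ≤ r * n + r)]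
      field_simp
      ring
    rw [harg, Gamma_add_nat _ hz n]
    have hG : Real.Gamma ((β + k) / r + 1) ≠ 0 := (Real.Gamma_pos_of_pos hz).ne'
    rw [hc]
    have hprod : ∏ i ∈ Finset.range n, ((β + k) / r + 1 + (i:ℝ))
        = ∏ i ∈ Finset.range n, ((1/r) * k + (β/r + 1) + i) := by
      refine Finset.prod_congr rfl fun i _ => ?_
      field_simp
      ring
    rw [hprod]
    set Pr := ∏ i ∈ Finset.range n, ((1/(r:ℝ)) * k + (β/r + 1) + i) with hPr
    have hG2 : Real.Gamma ((β + ↑k) * (↑r)⁻¹ + 1) ≠ 0 := by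
      rw [← div_eq_mul_inv]; exact hG
    simp only [hc, div_eq_mul_inv]
    linear_combination ((r:ℝ))⁻¹ * (-1:ℝ)^(n-k) * (n.choose k : ℝ) * Pr *
      mul_inv_cancel₀ hG2
  rw [Finset.sum_congr rfl hval, ← Finset.mul_sum,
    key_sum n (1/r) (β/r + 1) (by positivity)]
  rw [eq_div_iff (by positivity : ((r:ℝ)) ^ (n+1) ≠ 0), one_div, inv_pow, pow_succ]
  field_simp
  try exact Or.inl (by ring)
  try ring
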